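/- Let μ = μ₁ ⊗ ν be a product probability measure on ℝ × ℝ^k with x = (x₁, x⊥), let c > 0, assume μ₁({0}) = 0 and ∫ ‖x⊥‖² dν < ∞, and let labels be generated by the calibrated logistic model with w* = c·e₁. Define Err = ∫ min(σ(c·t), 1−σ(c·t)) dμ₁(t), A = ∫ σ(c·x₁)·(1−σ(c·x₁))·x⊥·x⊥ᵀ dμ, and C = ∫ x⊥·x⊥ᵀ dν. If Err > 0 and A and C are positive definite, then 2·Err·A^{−1} ⪯ ((1/4)·C)^{−1} ⪯ 4·Err·A^{−1} in the Loewner order; i.e., the asymptotic variance of uncertainty sampling in the directions orthogonal to w* is between 2·Err and 4·Err times that of random sampling. -/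

import Mathlib

open MeasureTheory

/-- The logistic sigmoid `σ(a) = 1 / (1 + exp (−a))`. -/
noncomputable def sigmoid (a : ℝ) : ℝ := 1 / (1 + Real.exp (-a))

lemma sigmoid_pos (a : ℝ) : 0 < sigmoid a := by
  unfold sigmoid; positivity

lemma sigmoid_lt_one (a : ℝ) : sigmoid a < 1 := by
  unfold sigmoid
  rw [div_lt_one (by positivity)]
  linarith [Real.exp_pos (-a)]

lemma continuous_sigmoid' : Continuous sigmoid := by
  unfold sigmoid
  exact continuous_const.div (by continuity) (fun a => by positivity)

lemma smul_posSemidef {n : ℕ} {M : Matrix (Fin n) (Fin n) ℝ} (hM : M.PosSemidef)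
    {r : ℝ} (hr : 0 ≤ r) : (r • M).PosSemidef := by
  rw [Matrix.posSemidef_iff_dotProduct_mulVec] at hM ⊢
  constructor
  · unfold Matrix.IsHermitian at *
    rw [Matrix.conjTranspose_smul, hM.1]
    simp
  · intro x
    have := hM.2 x
    simp only [Matrix.smul_mulVec, dotProduct_smul, smul_eq_mul] at *
    exact mul_nonneg hr this

/-- Let `μ = μ₁ ⊗ ν` be a product probability measure on `ℝ × ℝᵏ`, `c > 0`,
`μ₁({0}) = 0`, `∫ ‖x⊥‖² dν < ∞`, with labels generated by the calibrated logistic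
model with `w* = c e₁`. With `Err = ∫ min (σ(c t)) (1 − σ(c t)) dμ₁`,
`A = ∫ σ(c x₁)(1 − σ(c x₁)) x⊥ x⊥ᵀ dμ` and `C = ∫ x⊥ x⊥ᵀ dν`, if `Err > 0` and both
`A` and `C` are positive definite, then
`2 Err A⁻¹ ⪯ ((1/4) C)⁻¹ ⪯ 4 Err A⁻¹` in the Loewner order: the asymptotic variance
of uncertainty sampling in the directions orthogonal to `w*` is between `2 Err` and
`4 Err` times that of random sampling. -/
theorem asymptotic_variance_sandwich {k : ℕ} (μ₁ : Measure ℝ)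
    (ν : Measure (EuclideanSpace ℝ (Fin k))) [IsProbabilityMeasure μ₁]
    [IsProbabilityMeasure ν] (c : ℝ) (hc : 0 < c)
    (h0 : μ₁ {0} = 0)
    (hint : Integrable (fun v : EuclideanSpace ℝ (Fin k) => ‖v‖ ^ 2) ν)
    (Err : ℝ) (hErr_def : Err = ∫ t, min (sigmoid (c * t)) (1 - sigmoid (c * t)) ∂μ₁)
    (hErr_pos : 0 < Err)
    (A C : Matrix (Fin k) (Fin k) ℝ)
    (hA : A = Matrix.of fun i j : Fin k =>
        ∫ x : ℝ × EuclideanSpace ℝ (Fin k),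
          sigmoid (c * x.1) * (1 - sigmoid (c * x.1)) * (x.2 i * x.2 j) ∂(μ₁.prod ν))
    (hC : C = Matrix.of fun i j : Fin k => ∫ v, v i * v j ∂ν)
    (hA_pd : A.PosDef) (hC_pd : C.PosDef) :
    (((1 / 4 : ℝ) • C)⁻¹ - (2 * Err) • A⁻¹).PosSemidef ∧
      ((4 * Err) • A⁻¹ - ((1 / 4 : ℝ) • C)⁻¹).PosSemidef := by
  set f : ℝ → ℝ := fun t => sigmoid (c * t) * (1 - sigmoid (c * t)) with hf
  set g : ℝ → ℝ := fun t => min (sigmoid (c * t)) (1 - sigmoid (c * t)) with hg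
  set κ : ℝ := ∫ t, f t ∂μ₁ with hκ
  -- A = κ • C
  have hAC : A = κ • C := by
    rw [hA, hC]
    ext i j
    simp only [Matrix.smul_apply, Matrix.of_apply, smul_eq_mul]
    exact integral_prod_mul f (fun v : EuclideanSpace ℝ (Fin k) => v i * v j)
  -- pointwise bounds
  have hfg1 : ∀ t, f t ≤ g t := by
    intro t
    have h1 := sigmoid_pos (c * t)
    have h2 := sigmoid_lt_one (c * t)
    rcases le_total (sigmoid (c * t)) (1 - sigmoid (c * t)) with h | h
    · simp only [hf, hg, min_eq_left h]; nlinarith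
    · simp only [hf, hg, min_eq_right h]; nlinarith
  have hfg2 : ∀ t, g t ≤ 2 * f t := by
    intro t
    have h1 := sigmoid_pos (c * t)
    have h2 := sigmoid_lt_one (c * t)
    rcases le_total (sigmoid (c * t)) (1 - sigmoid (c * t)) with h | h
    · simp only [hf, hg, min_eq_left h]; nlinarith
    · simp only [hf, hg, min_eq_right h]; nlinarith
  -- integrability
  have hfc : Continuous f := by
    apply Continuous.mul
    · exact continuous_sigmoid'.comp (continuous_const.mul continuous_id)
    · exact continuous_const.sub (continuous_sigmoid'.comp (continuous_const.mul continuous_id))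
  have hgc : Continuous g := by
    apply Continuous.min
    · exact continuous_sigmoid'.comp (continuous_const.mul continuous_id)
    · exact continuous_const.sub (continuous_sigmoid'.comp (continuous_const.mul continuous_id))
  have hfint : Integrable f μ₁ := by
    apply (integrable_const (1 : ℝ)).mono' hfc.aestronglyMeasurable
    filter_upwards with t
    have h1 := sigmoid_pos (c * t)
    have h2 := sigmoid_lt_one (c * t)
    rw [Real.norm_eq_abs, abs_le, hf]
    beta_reduce
    constructor <;> nlinarith
  have hgint : Integrable g μ₁ := by
    apply (integrable_const (1 : ℝ)).mono' hgc.aestronglyMeasurable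
    filter_upwards with t
    have h1 := sigmoid_pos (c * t)
    have h2 := sigmoid_lt_one (c * t)
    rw [Real.norm_eq_abs, abs_le, hg]
    beta_reduce
    constructor <;>
      [nlinarith [le_min h1.le (by linarith : (0:ℝ) ≤ 1 - sigmoid (c*t))];
       nlinarith [min_le_left (sigmoid (c*t)) (1 - sigmoid (c*t))]]
  -- κ bounds
  have hκ_le : κ ≤ Err := by
    rw [hErr_def]; exact integral_mono hfint hgint hfg1
  have hErr_le : Err ≤ 2 * κ := by
    rw [hErr_def]
    calc ∫ t, g t ∂μ₁ ≤ ∫ t, 2 * f t ∂μ₁ := integral_mono hgint (hfint.const_mul 2) hfg2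
    _ = 2 * κ := by rw [integral_const_mul]
  have hκ_pos : 0 < κ := by linarith
  have hκ_ne : κ ≠ 0 := ne_of_gt hκ_pos
  -- invert
  haveI : Invertible κ := invertibleOfNonzero hκ_ne
  haveI : Invertible (1/4 : ℝ) := invertibleOfNonzero (by norm_num)
  have hCdet : IsUnit C.det := hC_pd.isUnit.map (Matrix.detMonoidHom)
  have hAinv : A⁻¹ = κ⁻¹ • C⁻¹ := by
    rw [hAC, Matrix.inv_smul (A := C) κ hCdet, invOf_eq_inv κ]
  have hCinv : ((1/4 : ℝ) • C)⁻¹ = (4 : ℝ) • C⁻¹ := by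
    rw [Matrix.inv_smul (A := C) _ hCdet, invOf_eq_inv (1/4:ℝ)]
    norm_num
  have hCps : (C⁻¹).PosSemidef := hC_pd.inv.posSemidef
  constructor
  · have : ((1 / 4 : ℝ) • C)⁻¹ - (2 * Err) • A⁻¹ = (4 - 2 * Err * κ⁻¹) • C⁻¹ := by
      rw [hCinv, hAinv, smul_smul, sub_smul]
    rw [this]
    apply smul_posSemidef hCps
    have h4 : 2 * Err * κ⁻¹ ≤ 4 := by
      rw [← div_eq_mul_inv, div_le_iff₀ hκ_pos]; linarith
    linarith
  · have : (4 * Err) • A⁻¹ - ((1 / 4 : ℝ) • C)⁻¹ = (4 * Err * κ⁻¹ - 4) • C⁻¹ := by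
      rw [hCinv, hAinv, smul_smul, sub_smul]
    rw [this]
    apply smul_posSemidef hCps
    have h4 : (4:ℝ) ≤ 4 * Err * κ⁻¹ := by
      rw [mul_assoc, ← div_eq_mul_inv]
      have h1 : (1:ℝ) ≤ Err / κ := (one_le_div hκ_pos).mpr hκ_le
      linarith
    linarith
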